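/- Let d, e, r ≥ 2 be integers. The solution S(d,e,r) is maximal, i.e. S(d,e,r) = {n ∈ ℕ : n ≥ 2 and d ∤ n}, if and only if all of the following hold: (1) d is prime; (2) d ∤ r; and (3) every prime divisor of d − 1 divides e. -/

import Mathlib

/-- The smallest set `S(d,e,r)` of positive integers such that `r ∈ S`,
`n ∈ S` whenever `n^e ∈ S`, and `(n+d)^e ∈ S` whenever `n ∈ S`. -/
inductive GenS (d e r : ℕ) : ℕ → Prop
  | base : GenS d e r r
  | down (n : ℕ) : GenS d e r (n ^ e) → GenS d e r n
  | up (n : ℕ) : GenS d e r n → GenS d e r ((n + d) ^ e)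

namespace GenSAux

lemma dvd_pow_self_of_prime_dvd : ∀ (N : ℕ), 1 ≤ N → ∀ (e : ℕ),
    (∀ q : ℕ, q.Prime → q ∣ N → q ∣ e) → N ∣ e ^ N := by
  intro N
  induction N using Nat.strong_induction_on with
  | _ N ih =>
    intro hN e h
    rcases eq_or_lt_of_le hN with h1 | h1
    · simp [← h1]
    · have hN2 : 2 ≤ N := h1
      set q := N.minFac with hq
      have hqp : q.Prime := Nat.minFac_prime (by omega)
      have hqN : q ∣ N := Nat.minFac_dvd N
      obtain ⟨M, hM⟩ := hqN
      have hq2 : 2 ≤ q := hqp.two_le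
      have hM1 : 1 ≤ M := by
        rcases Nat.eq_zero_or_pos M with h0 | h0
        · subst h0; omega
        · exact h0
      have hMlt : M < N := by nlinarith
      have hIH : M ∣ e ^ M := ih M hMlt hM1 e (fun p hp hpM => h p hp (hM ▸ Dvd.dvd.mul_left hpM q))
      have hqe : q ∣ e := h q hqp ⟨M, hM⟩
      have hmul : q * M ∣ e * e ^ (N - 1) :=
        mul_dvd_mul hqe (hIH.trans (pow_dvd_pow e (by omega)))
      have hpow : e ^ N = e * e ^ (N - 1) := by
        conv_lhs => rw [show N = 1 + (N - 1) by omega, pow_add, pow_one]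
      have h2 : q * M ∣ e ^ N := by rw [hpow]; exact hmul
      rw [← hM] at h2
      exact h2

variable {d e r : ℕ}

lemma add_d {n : ℕ} (h : GenS d e r n) : GenS d e r (n + d) :=
  GenS.down _ (GenS.up _ h)

lemma add_mul {n : ℕ} (h : GenS d e r n) (k : ℕ) : GenS d e r (n + k * d) := by
  induction k with
  | zero => simpa using h
  | succ k ih =>
      have hh := add_d ih
      have heq : n + k * d + d = n + (k + 1) * d := by ring
      rwa [heq] at hh

lemma of_le_modEq {m t : ℕ} (h : GenS d e r m) (hle : m ≤ t) (hmod : m ≡ t [MOD d]) :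
    GenS d e r t := by
  have hdvd : d ∣ t - m := (Nat.modEq_iff_dvd' hle).mp hmod
  obtain ⟨k, hk⟩ := hdvd
  have ht : t = m + k * d := by rw [mul_comm]; omega
  rw [ht]; exact add_mul h k

lemma two_le (he : 2 ≤ e) (hd : 2 ≤ d) (hr : 2 ≤ r) {n : ℕ} (h : GenS d e r n) : 2 ≤ n := by
  induction h with
  | base => exact hr
  | down n hn ih =>
      by_contra hlt
      have hle : n ^ e ≤ 1 := by
        calc n ^ e ≤ 1 ^ e := Nat.pow_le_pow_left (by omega) e
        _ = 1 := one_pow e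
      omega
  | up n hn ih =>
      calc 2 ≤ n + d := by omega
      _ ≤ (n + d) ^ e := Nat.le_self_pow (by omega) _

lemma not_dvd (he : 2 ≤ e) (hp : d.Prime) (hdr : ¬ d ∣ r) {n : ℕ} (h : GenS d e r n) :
    ¬ d ∣ n := by
  induction h with
  | base => exact hdr
  | down n hn ih => exact fun hdn => ih (dvd_pow hdn (by omega))
  | up n hn ih => exact fun hdn => ih (by
      have hh := hp.dvd_of_dvd_pow hdn
      exact (Nat.dvd_add_self_right).mp hh)

lemma res_pow {x : ZMod d} (h : ∃ m, GenS d e r m ∧ (m : ZMod d) = x) :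
    ∃ m, GenS d e r m ∧ (m : ZMod d) = x ^ e := by
  obtain ⟨m, hm, hx⟩ := h
  refine ⟨(m + d) ^ e, GenS.up m hm, ?_⟩
  push_cast [ZMod.natCast_self]
  simp [hx]

lemma res_pow_iter (k : ℕ) {x : ZMod d} (h : ∃ m, GenS d e r m ∧ (m : ZMod d) = x) :
    ∃ m, GenS d e r m ∧ (m : ZMod d) = x ^ (e ^ k) := by
  induction k with
  | zero => simpa using h
  | succ k ih =>
      have hh := res_pow ih
      rwa [← pow_mul, ← pow_succ] at hh

lemma res_root [NeZero d] (he : 2 ≤ e) {y : ZMod d}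
    (h : ∃ m, GenS d e r m ∧ (m : ZMod d) = y ^ e) :
    ∃ n, GenS d e r n ∧ (n : ZMod d) = y := by
  obtain ⟨m, hm, hx⟩ := h
  have hd1 : 1 ≤ d := Nat.pos_of_ne_zero (NeZero.ne d)
  set n := y.val + (m + 1) * d with hn
  have hcast : (n : ZMod d) = y := by
    have h0 : ((d : ℕ) : ZMod d) = 0 := ZMod.natCast_self d
    rw [hn]
    push_cast
    rw [ZMod.natCast_val, ZMod.cast_id, h0]
    ring
  have hge : m ≤ n ^ e := by
    have h1 : m + 1 ≤ n := by
      have hmm : (m + 1) * 1 ≤ (m + 1) * d := Nat.mul_le_mul_left _ hd1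
      omega
    have h2 : n ≤ n ^ e := Nat.le_self_pow (by omega) n
    omega
  have hmod : m ≡ n ^ e [MOD d] := by
    have hcc : ((m : ℕ) : ZMod d) = ((n ^ e : ℕ) : ZMod d) := by
      push_cast
      rw [hcast, hx]
    exact (ZMod.natCast_eq_natCast_iff _ _ _).mp hcc
  exact ⟨n, GenS.down n (of_le_modEq hm hge hmod), hcast⟩

lemma res_root_iter [NeZero d] (he : 2 ≤ e) (k : ℕ) {y : ZMod d}
    (h : ∃ m, GenS d e r m ∧ (m : ZMod d) = y ^ (e ^ k)) :
    ∃ n, GenS d e r n ∧ (n : ZMod d) = y := by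
  induction k generalizing y with
  | zero => simpa using h
  | succ k ih =>
      apply ih
      apply res_root he
      rwa [← pow_mul, ← pow_succ]

lemma res_all [Fact d.Prime] (he : 2 ≤ e) (hd : 2 ≤ d) (hdr : ¬ d ∣ r)
    (hq : ∀ q : ℕ, q.Prime → q ∣ d - 1 → q ∣ e) (x : ZMod d) (hx : x ≠ 0) :
    ∃ m, GenS d e r m ∧ (m : ZMod d) = x := by
  obtain ⟨c, hc⟩ := dvd_pow_self_of_prime_dvd (d - 1) (by omega) e hq
  have key : ∀ z : ZMod d, z ≠ 0 → z ^ (e ^ (d - 1)) = 1 := by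
    intro z hz
    rw [hc, pow_mul, ZMod.pow_card_sub_one_eq_one hz, one_pow]
  have hr0 : ((r : ℕ) : ZMod d) ≠ 0 := by
    rw [Ne, ZMod.natCast_eq_zero_iff]; exact hdr
  have h1 := res_pow_iter (d := d) (e := e) (r := r) (d - 1) ⟨r, GenS.base, rfl⟩
  rw [key _ hr0] at h1
  apply res_root_iter he (d - 1)
  rw [key x hx]
  exact h1

lemma mem_of_two_le_not_dvd [Fact d.Prime] (he : 2 ≤ e) (hd : 2 ≤ d) (hdr : ¬ d ∣ r)
    (hq : ∀ q : ℕ, q.Prime → q ∣ d - 1 → q ∣ e) {n : ℕ} (hn2 : 2 ≤ n) (hdn : ¬ d ∣ n) :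
    GenS d e r n := by
  classical
  have hres : ∀ x : ZMod d, x ≠ 0 → ∃ m, GenS d e r m ∧ (m : ZMod d) = x :=
    res_all he hd hdr hq
  let f : ZMod d → ℕ := fun x => if h : x ≠ 0 then (hres x h).choose else 0
  set M := Finset.univ.sup f with hM
  have hbig : ∀ t : ℕ, ((t : ℕ) : ZMod d) ≠ 0 → M ≤ t → GenS d e r t := by
    intro t ht hMt
    have hspec := (hres _ ht).choose_spec
    have hfle : f ((t : ℕ) : ZMod d) ≤ M := Finset.le_sup (Finset.mem_univ _)
    have hfval : f ((t : ℕ) : ZMod d) = (hres _ ht).choose := dif_pos ht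
    refine of_le_modEq hspec.1 (by omega) ?_
    exact (ZMod.natCast_eq_natCast_iff _ _ _).mp hspec.2
  have desc : ∀ (k m : ℕ), GenS d e r (m ^ (e ^ k)) → GenS d e r m := by
    intro k
    induction k with
    | zero => intro m h; simpa using h
    | succ k ih =>
        intro m h
        rw [pow_succ, pow_mul] at h
        exact ih m (GenS.down _ h)
  have hMle : M ≤ n ^ (e ^ M) := by
    calc M ≤ 2 ^ M := (Nat.lt_two_pow_self (n := M)).le
    _ ≤ 2 ^ (e ^ M) := Nat.pow_le_pow_right (by omega) (Nat.lt_pow_self (n := M) he).le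
    _ ≤ n ^ (e ^ M) := Nat.pow_le_pow_left hn2 _
  have hn0 : ((n : ℕ) : ZMod d) ≠ 0 := by
    rw [Ne, ZMod.natCast_eq_zero_iff]; exact hdn
  have hne : ((n ^ (e ^ M) : ℕ) : ZMod d) ≠ 0 := by
    push_cast
    exact pow_ne_zero _ hn0
  exact desc M n (hbig _ hne hMle)

lemma inv_p (he : 2 ≤ e) {p : ℕ} (hp : p.Prime) (hpd : p ∣ d) {n : ℕ} (h : GenS d e r n) :
    (p ∣ n ↔ p ∣ r) := by
  induction h with
  | base => rfl
  | down n hn ih =>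
      rw [← ih]
      exact ⟨fun h' => dvd_pow h' (by omega), fun h' => hp.dvd_of_dvd_pow h'⟩
  | up n hn ih =>
      rw [← ih]
      constructor
      · intro h'
        have h2 := hp.dvd_of_dvd_pow h'
        exact (Nat.dvd_add_iff_left hpd).mpr h2
      · intro h'
        exact dvd_pow (dvd_add h' hpd) (by omega)

lemma inv_q [Fact d.Prime] (he : 2 ≤ e) {q : ℕ} (hq : q.Prime) (hqd : q ∣ d - 1)
    (hqe : ¬ q ∣ e) (hdr : ¬ d ∣ r) {n : ℕ} (h : GenS d e r n) :
    ((n : ZMod d) ≠ 0) ∧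
      (((n : ZMod d)) ^ ((d - 1) / q) = 1 ↔ ((r : ZMod d)) ^ ((d - 1) / q) = 1) := by
  have hd2 : 2 ≤ d := (Fact.out : d.Prime).two_le
  have hsq : (d - 1) / q * q = d - 1 := Nat.div_mul_cancel hqd
  have hcop : Nat.Coprime q e := (Nat.Prime.coprime_iff_not_dvd hq).mpr hqe
  have key : ∀ x : ZMod d, x ≠ 0 → ((x ^ ((d - 1) / q)) ^ e = 1 ↔ x ^ ((d - 1) / q) = 1) := by
    intro x hx
    constructor
    · intro h1
      set y := x ^ ((d - 1) / q) with hy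
      have hyq : y ^ q = 1 := by
        rw [hy, ← pow_mul, hsq, ZMod.pow_card_sub_one_eq_one hx]
      have h2 : orderOf y ∣ q := orderOf_dvd_of_pow_eq_one hyq
      have h3 : orderOf y ∣ e := orderOf_dvd_of_pow_eq_one h1
      have h4 : orderOf y ∣ Nat.gcd q e := Nat.dvd_gcd h2 h3
      rw [hcop] at h4
      exact orderOf_eq_one_iff.mp (Nat.eq_one_of_dvd_one h4) ▸ rfl
    · intro h1; rw [h1, one_pow]
  induction h with
  | base =>
      refine ⟨?_, Iff.rfl⟩
      rw [Ne, ZMod.natCast_eq_zero_iff]; exact hdr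
  | down n hn ih =>
      obtain ⟨ih0, ih1⟩ := ih
      have hcast : ((n ^ e : ℕ) : ZMod d) = ((n : ZMod d)) ^ e := by push_cast; ring
      rw [hcast] at ih0 ih1
      have hn0 : (n : ZMod d) ≠ 0 := fun h0 => ih0 (by rw [h0, zero_pow (by omega)])
      refine ⟨hn0, ?_⟩
      rw [← ih1, ← pow_mul, mul_comm, pow_mul]
      exact (key _ hn0).symm
  | up n hn ih =>
      obtain ⟨ih0, ih1⟩ := ih
      have hcast : (((n + d) ^ e : ℕ) : ZMod d) = ((n : ZMod d)) ^ e := by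
        push_cast [ZMod.natCast_self]; ring
      rw [hcast]
      have hne : ((n : ZMod d)) ^ e ≠ 0 := pow_ne_zero _ ih0
      refine ⟨hne, ?_⟩
      rw [← ih1, ← pow_mul, mul_comm, pow_mul]
      exact key _ ih0

lemma cast_val_add_d [NeZero d] (x : ZMod d) : ((x.val + d : ℕ) : ZMod d) = x := by
  push_cast
  rw [ZMod.natCast_val, ZMod.cast_id, ZMod.natCast_self, add_zero]

lemma exists_pow_ne_one [Fact d.Prime] (hd3 : 3 ≤ d) {s : ℕ} (hs1 : 1 ≤ s)
    (hs : s < d - 1) :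
    ∃ n : ℕ, 2 ≤ n ∧ ¬ d ∣ n ∧ ((n : ZMod d)) ^ s ≠ 1 := by
  obtain ⟨g, hg⟩ := IsCyclic.exists_generator (α := (ZMod d)ˣ)
  have hcard : Fintype.card (ZMod d)ˣ = d - 1 := by
    rw [ZMod.card_units_eq_totient, Nat.totient_prime Fact.out]
  have horder : orderOf g = d - 1 := by
    rw [orderOf_eq_card_of_forall_mem_zpowers hg, Nat.card_eq_fintype_card, hcard]
  set x : ZMod d := (g : ZMod d) with hxdef
  have hxne : x ≠ 0 := g.ne_zero
  have hxs : x ^ s ≠ 1 := by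
    intro h1
    have hu : (g ^ s : (ZMod d)ˣ) = 1 := by
      apply Units.ext
      rw [Units.val_pow_eq_pow_val, Units.val_one]
      exact h1
    have hdvd := orderOf_dvd_of_pow_eq_one hu
    rw [horder] at hdvd
    have := Nat.le_of_dvd (by omega) hdvd
    omega
  refine ⟨x.val + d, by omega, ?_, ?_⟩
  · intro hdvd
    have h0 : ((x.val + d : ℕ) : ZMod d) = 0 :=
      (ZMod.natCast_eq_zero_iff _ _).mpr hdvd
    rw [cast_val_add_d] at h0
    exact hxne h0
  · rw [cast_val_add_d]
    exact hxs

end GenSAux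

/-- The solution `S(d,e,r)` is maximal if and only if `d` is prime, `d ∤ r`,
and every prime divisor of `d − 1` divides `e`. -/
theorem genS_maximal_iff (d e r : ℕ) (hd : 2 ≤ d) (he : 2 ≤ e) (hr : 2 ≤ r) :
    {n : ℕ | GenS d e r n} = {n : ℕ | 2 ≤ n ∧ ¬ (d ∣ n)} ↔
      (d.Prime ∧ ¬ (d ∣ r) ∧ ∀ q : ℕ, q.Prime → q ∣ d - 1 → q ∣ e) := by
  constructor
  · intro hset
    have hmem : ∀ n, GenS d e r n ↔ (2 ≤ n ∧ ¬ d ∣ n) := fun n => Set.ext_iff.mp hset n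
    have hdr : ¬ d ∣ r := ((hmem r).mp GenS.base).2
    have hprime : d.Prime := by
      by_contra hnp
      set p := d.minFac with hpdef
      have hp : p.Prime := Nat.minFac_prime (by omega)
      have hpd : p ∣ d := Nat.minFac_dvd d
      have hplt : p < d := lt_of_le_of_ne (Nat.minFac_le (by omega)) (fun h => hnp (h ▸ hp))
      have hp2 := hp.two_le
      have hgp : GenS d e r p := (hmem p).mpr ⟨hp2, fun h => by
        have := Nat.le_of_dvd (by omega) h; omega⟩
      have h1 : p ∣ r := (GenSAux.inv_p he hp hpd hgp).mp dvd_rfl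
      have hex : ∃ n, 2 ≤ n ∧ ¬ d ∣ n ∧ ¬ p ∣ n := by
        by_cases hc : d ∣ p + 1
        · refine ⟨2 * p + 1, by omega, ?_, ?_⟩
          · intro h
            have h2 : d ∣ 2 * (p + 1) - (2 * p + 1) := Nat.dvd_sub (Dvd.dvd.mul_left hc 2) h
            have h3 : 2 * (p + 1) - (2 * p + 1) = 1 := by omega
            rw [h3] at h2
            have := Nat.le_of_dvd (by omega) h2
            omega
          · intro h
            have h2 : p ∣ 2 * p + 1 - 2 * p := Nat.dvd_sub h (Dvd.intro 2 (by ring))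
            have h3 : 2 * p + 1 - 2 * p = 1 := by omega
            rw [h3] at h2
            have := Nat.le_of_dvd (by omega) h2
            omega
        · refine ⟨p + 1, by omega, hc, ?_⟩
          intro h
          have h2 : p ∣ p + 1 - p := Nat.dvd_sub h dvd_rfl
          have h3 : p + 1 - p = 1 := by omega
          rw [h3] at h2
          have := Nat.le_of_dvd (by omega) h2
          omega
      obtain ⟨n, hn2, hdn, hpn⟩ := hex
      exact hpn ((GenSAux.inv_p he hp hpd ((hmem n).mpr ⟨hn2, hdn⟩)).mpr h1)
    refine ⟨hprime, hdr, ?_⟩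
    intro q hq hqd
    by_contra hqe
    haveI : Fact d.Prime := ⟨hprime⟩
    have hq2 := hq.two_le
    have hd1 : 2 ≤ d - 1 := le_trans hq2 (Nat.le_of_dvd (by omega) hqd)
    have hs1 : 1 ≤ (d - 1) / q := Nat.div_pos (Nat.le_of_dvd (by omega) hqd) (by omega)
    have hslt : (d - 1) / q < d - 1 := Nat.div_lt_self (by omega) (by omega)
    have hg1 : GenS d e r (d + 1) := (hmem _).mpr ⟨by omega, fun h => by
      have h2 : d ∣ d + 1 - d := Nat.dvd_sub h dvd_rfl
      have h3 : d + 1 - d = 1 := by omega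
      rw [h3] at h2
      have := Nat.le_of_dvd (by omega) h2
      omega⟩
    have hinv1 := (GenSAux.inv_q he hq hqd hqe hdr hg1).2
    have hcast1 : ((d + 1 : ℕ) : ZMod d) = 1 := by push_cast [ZMod.natCast_self]; ring
    rw [hcast1, one_pow] at hinv1
    have hr1 : ((r : ZMod d)) ^ ((d - 1) / q) = 1 := hinv1.mp rfl
    obtain ⟨n, hn2, hdn, hne1⟩ := GenSAux.exists_pow_ne_one (d := d) (by omega) hs1 hslt
    have hinv2 := (GenSAux.inv_q he hq hqd hqe hdr ((hmem n).mpr ⟨hn2, hdn⟩)).2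
    exact hne1 (hinv2.mpr hr1)
  · rintro ⟨hprime, hdr, hq⟩
    haveI : Fact d.Prime := ⟨hprime⟩
    ext n
    simp only [Set.mem_setOf_eq]
    constructor
    · intro h
      exact ⟨GenSAux.two_le he hd hr h, GenSAux.not_dvd he hprime hdr h⟩
    · rintro ⟨hn2, hdn⟩
      exact GenSAux.mem_of_two_le_not_dvd he hd hdr hq hn2 hdn
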